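/- Let f ∈ Λ. If there exists N ∈ ℕ such that π_C^(n)(f) = 0 for all n ≥ N, then f = 0. -/

import Mathlib

open MvPolynomial

noncomputable section

/-- The ring of symmetric functions, realized as polynomials in the power sums
`p₁, p₂, …`; the variable `X r` represents `p_{r+1}`. -/
abbrev SymF : Type := MvPolynomial ℕ ℚ

/-- Laurent polynomials in `k` variables. -/
abbrev Laur (k : ℕ) : Type := AddMonoidAlgebra ℚ (Fin k →₀ ℤ)

/-- The Laurent monomial `x_i ^ z`. -/
def lX {k : ℕ} (i : Fin k) (z : ℤ) : Laur k :=
  AddMonoidAlgebra.single (Finsupp.single i z) 1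

/-- `π_C^{(n)} : Λ → ℚ[x₁^{±1},…,xₙ^{±1}]`, `p_r ↦ Σᵢ (x_i^r + x_i^{-r})`. -/
def piC (n : ℕ) : SymF →ₐ[ℚ] Laur n :=
  aeval fun r => ∑ i : Fin n, (lX i ((r : ℤ) + 1) + lX i (-((r : ℤ) + 1)))

namespace PiCAux

open Polynomial Function

/-! ### Dickson polynomial degree facts -/

lemma three_sub_one : ((3:ℚ[X]) - ((1:ℕ):ℚ[X])) = Polynomial.C 2 := by
  norm_num
  rfl

lemma dickson_zero' : Polynomial.dickson 1 (1:ℚ) 0 = Polynomial.C 2 := by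
  rw [Polynomial.dickson_zero]; exact three_sub_one

lemma dickson_degree_le (k : ℕ) : (Polynomial.dickson 1 (1:ℚ) k).degree ≤ k := by
  have H : ∀ k : ℕ, (Polynomial.dickson 1 (1:ℚ) k).degree ≤ k ∧
      (Polynomial.dickson 1 (1:ℚ) (k+1)).degree ≤ (k+1 : ℕ) := by
    intro k
    induction k with
    | zero =>
      constructor
      · rw [dickson_zero']; exact degree_C_le.trans (by exact_mod_cast Nat.cast_nonneg' 0)
      · rw [Polynomial.dickson_one]; simpa using degree_X_le
    | succ m ihm =>
      refine ⟨ihm.2, ?_⟩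
      rw [Polynomial.dickson_add_two]
      refine (degree_sub_le _ _).trans (max_le ?_ ?_)
      · refine (degree_mul_le _ _).trans ?_
        calc degree (Polynomial.X : ℚ[X]) + degree (Polynomial.dickson 1 (1:ℚ) (m+1))
            ≤ 1 + ((m+1 : ℕ) : WithBot ℕ) := add_le_add degree_X_le ihm.2
          _ ≤ ((m+2 : ℕ) : WithBot ℕ) := by
              exact_mod_cast (by omega : 1 + (m+1) ≤ m + 2)
      · refine (degree_mul_le _ _).trans ?_
        calc degree (Polynomial.C (1:ℚ)) + degree (Polynomial.dickson 1 (1:ℚ) m)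
            ≤ 0 + (m : WithBot ℕ) := add_le_add degree_C_le ihm.1
          _ ≤ ((m+2 : ℕ) : WithBot ℕ) := by
              rw [zero_add]; exact_mod_cast (by omega : m ≤ m + 2)
  exact (H k).1

lemma dickson_sub_pow_degree_lt (k : ℕ) :
    (Polynomial.dickson 1 (1:ℚ) (k+1) - Polynomial.X ^ (k+1)).degree
      < ((k+1 : ℕ) : WithBot ℕ) := by
  have H : ∀ k : ℕ,
      (Polynomial.dickson 1 (1:ℚ) (k+1) - Polynomial.X ^ (k+1)).degree
        < ((k+1 : ℕ) : WithBot ℕ) ∧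
      (Polynomial.dickson 1 (1:ℚ) (k+2) - Polynomial.X ^ (k+2)).degree
        < ((k+2 : ℕ) : WithBot ℕ) := by
    intro k
    induction k with
    | zero =>
      constructor
      · rw [Polynomial.dickson_one]
        norm_num
      · rw [Polynomial.dickson_two]
        have h2 : (Polynomial.X ^ 2 - Polynomial.C (1:ℚ) * (3 - ((1:ℕ):ℚ[X]))
            - Polynomial.X ^ (0+2) : ℚ[X]) = -(Polynomial.C (2:ℚ)) := by
          rw [three_sub_one, map_one, one_mul]; ring
        rw [show (0+2 : ℕ) = 2 from rfl] at h2 ⊢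
        rw [h2, degree_neg]
        exact degree_C_le.trans_lt (by exact_mod_cast (by omega : 0 < 2))
    | succ m ihm =>
      refine ⟨ihm.2, ?_⟩
      have h1 : (Polynomial.dickson 1 (1:ℚ) (m+3) - Polynomial.X ^ (m+3) : ℚ[X])
          = Polynomial.X * (Polynomial.dickson 1 (1:ℚ) (m+2) - Polynomial.X ^ (m+2))
            - Polynomial.C (1:ℚ) * Polynomial.dickson 1 (1:ℚ) (m+1) := by
        rw [Polynomial.dickson_add_two]
        push_cast
        ring
      rw [show m+1+2 = m+3 by omega, h1]
      refine (degree_sub_le _ _).trans_lt (max_lt ?_ ?_)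
      · refine (degree_mul_le _ _).trans_lt ?_
        calc degree (Polynomial.X : ℚ[X])
              + degree (Polynomial.dickson 1 (1:ℚ) (m+2) - Polynomial.X ^ (m+2))
            < 1 + ((m+2 : ℕ) : WithBot ℕ) :=
              WithBot.add_lt_add_of_le_of_lt (by simp) degree_X_le ihm.2
          _ ≤ ((m+3 : ℕ) : WithBot ℕ) := by
              exact_mod_cast (by omega : 1 + (m+2) ≤ m + 3)
      · refine (degree_mul_le _ _).trans_lt ?_
        calc degree (Polynomial.C (1:ℚ)) + degree (Polynomial.dickson 1 (1:ℚ) (m+1))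
            ≤ 0 + ((m+1 : ℕ) : WithBot ℕ) := add_le_add degree_C_le (dickson_degree_le (m+1))
          _ < ((m+3 : ℕ) : WithBot ℕ) := by
              rw [zero_add]; exact_mod_cast (by omega : m + 1 < m + 3)
  exact (H k).1

/-! ### The symmetric polynomials `Σ_i D_j(x_i)` and the subalgebra they generate -/

variable (n : ℕ)

/-- `Σ_i D_j(x_i)` as a multivariate polynomial. -/
def dsum (j : ℕ) : MvPolynomial (Fin n) ℚ :=
  ∑ i : Fin n, Polynomial.aeval (MvPolynomial.X i) (Polynomial.dickson 1 (1:ℚ) j)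

def qfam : Fin n → MvPolynomial (Fin n) ℚ := fun k => dsum n ((k : ℕ) + 1)

lemma dsum_isSymmetric (j : ℕ) : (dsum n j).IsSymmetric := by
  intro e
  unfold dsum
  rw [map_sum]
  have he : ∀ i : Fin n, (rename e : MvPolynomial (Fin n) ℚ →ₐ[ℚ] MvPolynomial (Fin n) ℚ)
      (Polynomial.aeval (MvPolynomial.X i) (Polynomial.dickson 1 (1:ℚ) j))
      = Polynomial.aeval (MvPolynomial.X (e i)) (Polynomial.dickson 1 (1:ℚ) j) := by
    intro i
    rw [← Polynomial.aeval_algHom_apply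
      (rename e : MvPolynomial (Fin n) ℚ →ₐ[ℚ] MvPolynomial (Fin n) ℚ)
      (MvPolynomial.X i), rename_X]
  rw [Finset.sum_congr rfl fun i _ => he i]
  exact Fintype.sum_equiv e _ _ fun i => rfl

lemma qfam_isSymmetric (k : Fin n) : (qfam n k).IsSymmetric := dsum_isSymmetric n _

/-- The subalgebra generated by the `qfam`. -/
def Sadj : Subalgebra ℚ (MvPolynomial (Fin n) ℚ) := Algebra.adjoin ℚ (Set.range (qfam n))

lemma dsum_mem {j : ℕ} (h1 : j ≤ n) : dsum n j ∈ Sadj n := by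
  cases j with
  | zero =>
    have : dsum n 0 = ∑ _i : Fin n, MvPolynomial.C (2:ℚ) := by
      unfold dsum
      refine Finset.sum_congr rfl fun i _ => ?_
      rw [dickson_zero']
      simp
    rw [this]
    exact Subalgebra.sum_mem _ fun i _ => by
      simpa using (Sadj n).algebraMap_mem (2:ℚ)
  | succ m =>
    have : dsum n (m+1) = qfam n ⟨m, by omega⟩ := rfl
    rw [this]
    exact Algebra.subset_adjoin ⟨_, rfl⟩

lemma psum_mem : ∀ k : ℕ, k ≤ n → MvPolynomial.psum (Fin n) ℚ k ∈ Sadj n := by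
  intro k
  induction k using Nat.strong_induction_on with
  | _ k ih =>
    intro hk
    match k with
    | 0 =>
      rw [MvPolynomial.psum_zero]
      exact Subalgebra.natCast_mem _ _
    | (m+1) =>
      set D := Polynomial.dickson 1 (1:ℚ) (m+1) with hD
      set r := D - Polynomial.X ^ (m+1) with hr
      have hdeg : r.natDegree < m + 1 := by
        rcases eq_or_ne r 0 with h0 | h0
        · rw [h0]; simp
        · exact natDegree_lt_iff_degree_lt h0 |>.2 (by exact_mod_cast dickson_sub_pow_degree_lt m)
      have hps : MvPolynomial.psum (Fin n) ℚ (m+1)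
          = dsum n (m+1) - ∑ i : Fin n, Polynomial.aeval (MvPolynomial.X i) r := by
        rw [MvPolynomial.psum]
        unfold dsum
        rw [← Finset.sum_sub_distrib]
        refine Finset.sum_congr rfl fun i _ => ?_
        rw [← map_sub]
        rw [show D - r = Polynomial.X ^ (m+1) by rw [hr]; ring]
        exact (Polynomial.aeval_X_pow (MvPolynomial.X i)).symm
      have hsum : ∑ i : Fin n, Polynomial.aeval (MvPolynomial.X i) r
          = ∑ d ∈ Finset.range (m+1), r.coeff d • MvPolynomial.psum (Fin n) ℚ d := by
        rw [Finset.sum_congr rfl fun i (_ : i ∈ Finset.univ) =>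
          Polynomial.aeval_eq_sum_range' hdeg (MvPolynomial.X i)]
        rw [Finset.sum_comm]
        refine Finset.sum_congr rfl fun d _ => ?_
        rw [MvPolynomial.psum, Finset.smul_sum]
      rw [hps, hsum]
      refine Subalgebra.sub_mem _ (dsum_mem n hk) (Subalgebra.sum_mem _ fun d hd => ?_)
      have hdm : d < m + 1 := Finset.mem_range.1 hd
      exact Subalgebra.smul_mem _ (ih d hdm (by omega)) _

lemma esymm_mem : ∀ k : ℕ, k ≤ n → MvPolynomial.esymm (Fin n) ℚ k ∈ Sadj n := by
  intro k
  induction k using Nat.strong_induction_on with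
  | _ k ih =>
    intro hk
    match k with
    | 0 => rw [MvPolynomial.esymm_zero]; exact Subalgebra.one_mem _
    | (m+1) =>
      have hnewton := MvPolynomial.psum_eq_mul_esymm_sub_sum (Fin n) ℚ (m+1) (by omega)
      set Ssum := ∑ a ∈ Finset.HasAntidiagonal.antidiagonal (m+1) with a.1 ∈ Set.Ioo 0 (m+1),
        (-1 : MvPolynomial (Fin n) ℚ) ^ a.1 * MvPolynomial.esymm (Fin n) ℚ a.1 *
        MvPolynomial.psum (Fin n) ℚ a.2 with hSsum
      have hc : ((-1 : MvPolynomial (Fin n) ℚ) ^ (m+1+1) * ((m+1 : ℕ) : MvPolynomial (Fin n) ℚ))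
          = MvPolynomial.C ((-1 : ℚ)^(m+2) * (m+1 : ℚ)) := by
        push_cast
        rw [map_mul, map_pow]
        simp
      have heq : MvPolynomial.esymm (Fin n) ℚ (m+1)
          = MvPolynomial.C (((-1 : ℚ)^(m+2) * (m+1 : ℚ))⁻¹) *
            (MvPolynomial.psum (Fin n) ℚ (m+1) + Ssum) := by
        have h1 : MvPolynomial.C ((-1 : ℚ)^(m+2) * (m+1 : ℚ)) * MvPolynomial.esymm (Fin n) ℚ (m+1)
            = MvPolynomial.psum (Fin n) ℚ (m+1) + Ssum := by
          rw [← hc]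
          rw [hnewton]
          ring_nf
        have hne : ((-1 : ℚ)^(m+2) * (m+1 : ℚ)) ≠ 0 := by
          apply mul_ne_zero (pow_ne_zero _ (by norm_num))
          positivity
        calc MvPolynomial.esymm (Fin n) ℚ (m+1)
            = MvPolynomial.C (((-1 : ℚ)^(m+2) * (m+1 : ℚ))⁻¹) *
              (MvPolynomial.C ((-1 : ℚ)^(m+2) * (m+1 : ℚ)) *
                MvPolynomial.esymm (Fin n) ℚ (m+1)) := by
              rw [← mul_assoc, ← map_mul, inv_mul_cancel₀ hne, MvPolynomial.C_1, one_mul]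
          _ = _ := by rw [h1]
      rw [heq]
      refine Subalgebra.mul_mem _ ((Sadj n).algebraMap_mem _) (Subalgebra.add_mem _
        (psum_mem n (m+1) hk) (Subalgebra.sum_mem _ fun a ha => ?_))
      simp only [Finset.mem_filter, Finset.HasAntidiagonal.mem_antidiagonal, Set.mem_Ioo] at ha
      refine Subalgebra.mul_mem _ (Subalgebra.mul_mem _ ?_ ?_) ?_
      · exact Subalgebra.pow_mem _ (Subalgebra.neg_mem _ (Subalgebra.one_mem _)) _
      · exact ih a.1 ha.2.2 (by omega)
      · exact psum_mem n a.2 (by omega)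

/-! ### Algebraic independence of the `qfam` -/

lemma surjEndoInjective (φ : MvPolynomial (Fin n) ℚ →ₐ[ℚ] MvPolynomial (Fin n) ℚ)
    (hφ : Surjective φ) : Injective φ := by
  set A := MvPolynomial (Fin n) ℚ
  have hpow : ∀ k : ℕ, Surjective ⇑(φ ^ k : A →ₐ[ℚ] A) := by
    intro k
    induction k with
    | zero => exact fun y => ⟨y, by simp⟩
    | succ m ihm =>
      rw [pow_succ]
      intro x
      obtain ⟨y, hy⟩ := ihm x
      obtain ⟨z, hz⟩ := hφ y
      exact ⟨z, by simp [AlgHom.mul_apply, hz, hy]⟩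
  have hmono : Monotone fun k : ℕ => RingHom.ker (φ ^ k : A →ₐ[ℚ] A) := by
    apply monotone_nat_of_le_succ
    intro k x hx
    rw [RingHom.mem_ker] at hx ⊢
    rw [pow_succ', AlgHom.mul_apply, hx, map_zero]
  have : IsNoetherian A A := by
    rw [← isNoetherianRing_iff]
    infer_instance
  obtain ⟨k, hk⟩ := monotone_stabilizes_iff_noetherian.2 this
    ⟨fun k => RingHom.ker (φ ^ k : A →ₐ[ℚ] A), hmono⟩
  rw [injective_iff_map_eq_zero]
  intro x hx
  obtain ⟨y, hy⟩ := hpow k x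
  have hy1 : y ∈ RingHom.ker (φ ^ (k+1) : A →ₐ[ℚ] A) := by
    rw [RingHom.mem_ker, pow_succ', AlgHom.mul_apply, hy, hx]
  have hkk := hk (k+1) (by omega)
  simp only [OrderHom.coe_mk] at hkk
  rw [← hkk] at hy1
  rw [RingHom.mem_ker] at hy1
  rw [← hy, hy1]

lemma qfam_algIndep : AlgebraicIndependent ℚ (qfam n) := by
  set A := MvPolynomial (Fin n) ℚ
  set efam : Fin n → A := fun k => MvPolynomial.esymm (Fin n) ℚ ((k : ℕ) + 1) with hefam
  have heval : ∀ p : A, aeval efam p = ((esymmAlgHom (Fin n) ℚ n) p : A) := by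
    intro p
    rw [esymmAlgHom_apply]
  have hEinj : Injective (aeval efam : A →ₐ[ℚ] A) := by
    intro a b hab
    rw [heval, heval] at hab
    exact esymmAlgHom_fin_injective ℚ (le_refl n) (Subtype.val_injective hab)
  have hQ : ∀ k : Fin n, ∃ q : A, aeval efam q = qfam n k := by
    intro k
    obtain ⟨q, hq⟩ := esymmAlgHom_fin_surjective ℚ (le_refl n)
      ⟨qfam n k, qfam_isSymmetric n k⟩
    exact ⟨q, by rw [heval, hq]⟩
  choose Q hQ using hQ
  have hE' : ∀ k : Fin n, ∃ p : A, aeval (qfam n) p = efam k := by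
    intro k
    have hmem : efam k ∈ Sadj n := esymm_mem n ((k : ℕ) + 1) (by omega)
    rw [Sadj, Algebra.adjoin_range_eq_range_aeval] at hmem
    obtain ⟨p, hp⟩ := hmem
    exact ⟨p, hp⟩
  choose E' hE' using hE'
  have h1 : ∀ x : A, aeval (qfam n) x = aeval efam (bind₁ Q x) := by
    intro x
    rw [aeval_bind₁, show (fun i => aeval efam (Q i)) = qfam n from funext hQ]
  have h2 : ∀ x : A, aeval efam x = aeval (qfam n) (bind₁ E' x) := by
    intro x
    rw [aeval_bind₁, show (fun i => aeval (qfam n) (E' i)) = efam from funext hE']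
  have hQE : ∀ p : A, bind₁ Q (bind₁ E' p) = p := by
    intro p
    apply hEinj
    rw [← h1, ← h2]
  have hinj : Injective (bind₁ Q : A →ₐ[ℚ] A) :=
    surjEndoInjective n (bind₁ Q) fun p => ⟨bind₁ E' p, hQE p⟩
  rw [algebraicIndependent_iff_injective_aeval]
  intro a b hab
  rw [h1, h1] at hab
  exact hinj (hEinj hab)

/-! ### Evaluation of Laurent polynomials at units of a field -/

section Field

variable (K : Type) [Field K] [CharZero K] (x : Fin n → Kˣ)

/-- evaluation of Laurent polynomials at units. -/
def psi : Laur n →ₐ[ℚ] K :=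
  AddMonoidAlgebra.lift ℚ K (Fin n →₀ ℤ) <| (Units.coeHom K).comp
    { toFun := fun d => ((Multiplicative.toAdd d).prod fun i z => x i ^ z : Kˣ)
      map_one' := by
        simp
      map_mul' := fun d e => by
        simp only [toAdd_mul]
        exact Finsupp.prod_add_index' (fun i => zpow_zero (x i))
          (fun i z1 z2 => zpow_add (x i) z1 z2) }

lemma psi_lX (i : Fin n) (zz : ℤ) : psi n K x (lX i zz) = ((x i ^ zz : Kˣ) : K) := by
  rw [lX, psi, AddMonoidAlgebra.lift_single, one_smul]
  simp only [MonoidHom.comp_apply, Units.coeHom_apply]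
  norm_cast
  show ((Finsupp.single i zz).prod fun i z => x i ^ z : Kˣ) = x i ^ zz
  exact Finsupp.prod_single_index (zpow_zero (x i))

lemma psi_piC_X (r : ℕ) : psi n K x (piC n (MvPolynomial.X r)) =
    ∑ i : Fin n, (((x i : Kˣ) : K) ^ (r+1) + (((x i)⁻¹ : Kˣ) : K) ^ (r+1)) := by
  rw [piC, MvPolynomial.aeval_X, map_sum]
  refine Finset.sum_congr rfl fun i _ => ?_
  rw [map_add, psi_lX, psi_lX, Units.val_zpow_eq_zpow_val, Units.val_zpow_eq_zpow_val,
    zpow_neg, Units.val_inv_eq_inv_val, ← inv_zpow,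
    show ((r:ℤ)+1) = ((r+1:ℕ):ℤ) by push_cast; ring, zpow_natCast, zpow_natCast]

lemma aeval_qfam (z : Fin n → K) (hz : ∀ i, z i = ((x i : Kˣ) : K) + (((x i)⁻¹ : Kˣ) : K))
    (j : Fin n) : MvPolynomial.aeval z (qfam n j) =
    ∑ i : Fin n, (((x i : Kˣ) : K) ^ ((j : ℕ)+1) + (((x i)⁻¹ : Kˣ) : K) ^ ((j : ℕ)+1)) := by
  unfold qfam dsum
  rw [map_sum]
  refine Finset.sum_congr rfl fun i _ => ?_
  rw [← Polynomial.aeval_algHom_apply (MvPolynomial.aeval z) (MvPolynomial.X i),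
    MvPolynomial.aeval_X]
  have hmul : ((x i : Kˣ) : K) * (((x i)⁻¹ : Kˣ) : K) = 1 := by
    rw [← Units.val_mul, mul_inv_cancel, Units.val_one]
  calc Polynomial.aeval (z i) (Polynomial.dickson 1 (1:ℚ) ((j:ℕ)+1))
      = Polynomial.eval (z i) (Polynomial.map (algebraMap ℚ K)
          (Polynomial.dickson 1 (1:ℚ) ((j:ℕ)+1))) := by
        rw [Polynomial.aeval_def, Polynomial.eval_map]
    _ = Polynomial.eval (z i) (Polynomial.dickson 1 (1:K) ((j:ℕ)+1)) := by
        rw [Polynomial.map_dickson, map_one]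
    _ = _ := by
        rw [hz i]
        exact Polynomial.dickson_one_one_eval_add_inv _ _ hmul _

end Field

end PiCAux

open PiCAux Function in
/-- If `π_C^{(n)}(f) = 0` for all large `n`, then `f = 0`. -/
theorem piC_eventually_zero_imp_zero (f : SymF)
    (h : ∃ N : ℕ, ∀ n : ℕ, N ≤ n → piC n f = 0) : f = 0 := by
  obtain ⟨N, hN⟩ := h
  obtain ⟨m, ι, hι, g, rfl⟩ := MvPolynomial.exists_fin_rename f
  set M := ((Finset.univ : Finset (Fin m)).sup fun k => ι k) + 1 with hM
  set n := max N M with hn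
  have hlt : ∀ k : Fin m, ι k < n := by
    intro k
    have h1 : ι k ≤ (Finset.univ : Finset (Fin m)).sup fun k => ι k :=
      Finset.le_sup (Finset.mem_univ k)
    have h2 : M ≤ n := le_max_right N M
    omega
  have h0 : piC n (rename ι g) = 0 := hN n (le_max_left _ _)
  set A := MvPolynomial (Fin n) ℚ with hA
  set F := FractionRing A with hF
  set K := AlgebraicClosure F with hK
  haveI : CharZero F := charZero_of_injective_algebraMap (IsFractionRing.injective A F)
  haveI : CharZero K := charZero_of_injective_algebraMap (algebraMap F K).injective
  set gmap : A →+* K := (algebraMap F K).comp (algebraMap A F) with hgmap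
  have hginj : Injective gmap := (algebraMap F K).injective.comp (IsFractionRing.injective A F)
  set z : Fin n → K := fun i => gmap (MvPolynomial.X i) with hz
  have hzind : AlgebraicIndependent ℚ z :=
    (MvPolynomial.algebraicIndependent_X (Fin n) ℚ).ringHom_of_comp_eq (RingHom.id ℚ) gmap
      surjective_id hginj (Subsingleton.elim _ _)
  have hroot : ∀ i : Fin n, ∃ u : Kˣ, z i = (u : K) + ((u⁻¹ : Kˣ) : K) := by
    intro i
    set P : Polynomial K := Polynomial.C 1 * Polynomial.X ^ 2 +
      Polynomial.C (-(z i)) * Polynomial.X + Polynomial.C 1 with hP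
    have hdeg : P.degree = 2 := Polynomial.degree_quadratic one_ne_zero
    obtain ⟨r, hr⟩ := IsAlgClosed.exists_root P (by rw [hdeg]; decide)
    have hre : r ^ 2 + -(z i) * r + 1 = 0 := by
      have := hr
      simp only [Polynomial.IsRoot, hP, Polynomial.eval_add, Polynomial.eval_mul,
        Polynomial.eval_pow, Polynomial.eval_C, Polynomial.eval_X, one_mul] at this
      linear_combination this
    have hr0 : r ≠ 0 := by
      intro h0'
      rw [h0'] at hre
      simp at hre
    refine ⟨Units.mk0 r hr0, ?_⟩
    rw [Units.val_inv_eq_inv_val, Units.val_mk0]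
    have hri := mul_inv_cancel₀ hr0
    linear_combination (-r⁻¹) * hre + (r - z i) * hri
  choose x hx using hroot
  have hq : AlgebraicIndependent ℚ (fun j : Fin n => MvPolynomial.aeval z (qfam n j)) :=
    hzind.aeval_of_algebraicIndependent (qfam_algIndep n)
  set w : ℕ → K :=
    fun r => ∑ i : Fin n, (((x i : Kˣ) : K) ^ (r+1) + (((x i)⁻¹ : Kˣ) : K) ^ (r+1)) with hw
  have hwind : AlgebraicIndependent ℚ (fun j : Fin n => w (j : ℕ)) := by
    rw [show (fun j : Fin n => w (j : ℕ))
      = fun j : Fin n => MvPolynomial.aeval z (qfam n j) from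
        funext fun j => (aeval_qfam n K x z hx j).symm]
    exact hq
  have hcomp : (psi n K x).comp (piC n) = MvPolynomial.aeval w :=
    MvPolynomial.algHom_ext fun r => by
      rw [AlgHom.comp_apply, psi_piC_X, MvPolynomial.aeval_X]
  have hz0 : MvPolynomial.aeval (w ∘ ι) g = 0 := by
    rw [← aeval_rename]
    have : MvPolynomial.aeval w (rename ι g) = (psi n K x) (piC n (rename ι g)) := by
      rw [← hcomp]; rfl
    rw [this, h0, map_zero]
  set jmap : Fin m → Fin n := fun k => ⟨ι k, hlt k⟩ with hjmap
  have hjinj : Injective jmap := fun a b hab => hι (congrArg Fin.val hab)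
  have hind2 : AlgebraicIndependent ℚ (w ∘ ι) := by
    have := hwind.comp jmap hjinj
    exact this
  have hg0 : g = 0 := by
    apply algebraicIndependent_iff_injective_aeval.1 hind2
    rw [map_zero]
    exact hz0
  rw [hg0, map_zero]

end
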